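/- Let U_F be the tail quantile function of a cdf F, and suppose F(t) < 1 and F is continuous and strictly increasing near t. Then the tail quantile function of the tail counterpart F^t (defined by F^t(x) = (F(xt)-F(t))/(1-F(t)) for x ≥ 1) satisfies U_{F^t}(x) = U_F(x/(1-F(t))) / U_F(1/(1-F(t))) for x > 1. -/

import Mathlib

open Pointwise


/-- The tail quantile function `U_F(t) = inf {x : F(x) ≥ 1 - 1/t}`. -/
noncomputable def tailQuantile (F : ℝ → ℝ) (t : ℝ) : ℝ := sInf {x : ℝ | 1 - 1 / t ≤ F x}

/-- The tail quantile function of the tail counterpart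
`F^t(x) = (F(xt) - F(t))/(1 - F(t))` satisfies
`U_{F^t}(x) = U_F(x/(1-F(t))) / U_F(1/(1-F(t)))` for `x > 1`. -/
theorem stmt10 (F : ℝ → ℝ) (t : ℝ) (ht : 0 < t) (hFt : F t < 1)
    (hFc : Continuous F) (hmono : StrictMonoOn F (Set.Ici t))
    (htU : tailQuantile F (1 / (1 - F t)) = t)
    (x : ℝ) (hx : 1 < x) :
    tailQuantile (fun y => (F (y * t) - F t) / (1 - F t)) x
      = tailQuantile F (x / (1 - F t)) / tailQuantile F (1 / (1 - F t)) := by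
  rw [htU]
  have hc : (0:ℝ) < 1 - F t := by linarith
  have hx0 : (0:ℝ) < x := by linarith
  unfold tailQuantile
  have hset : {y : ℝ | 1 - 1 / x ≤ (F (y * t) - F t) / (1 - F t)}
      = (1/t) • {z : ℝ | 1 - 1 / (x / (1 - F t)) ≤ F z} := by
    ext y
    simp only [Set.mem_smul_set, Set.mem_setOf_eq]
    have key : (1 - 1 / x ≤ (F (y * t) - F t) / (1 - F t))
        ↔ (1 - 1 / (x / (1 - F t)) ≤ F (y * t)) := by
      rw [le_div_iff₀ hc, one_div_div]
      have hexp : (1 - 1 / x) * (1 - F t) = (1 - F t) - (1 - F t) / x := by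
        field_simp
      constructor <;> intro h <;> linarith
    constructor
    · intro h
      exact ⟨y * t, key.mp h, by simp only [smul_eq_mul]; field_simp⟩
    · rintro ⟨z, hz, rfl⟩
      apply key.mpr
      have : (1 / t) • z * t = z := by
        simp only [smul_eq_mul]; field_simp
      rw [this]; exact hz
  rw [hset, Real.sInf_smul_of_nonneg (by positivity)]
  simp [smul_eq_mul, div_eq_mul_inv, mul_comm]
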